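/- arXiv:0902.1330 — 2 statements merged into one kernel-verified Lean document; each statement's English description precedes it below -/
import Mathlib

section
/- There exist absolute constants c, C > 0 such that for every injective map τ : D → D with inverse σ = τ^{−1} : τ(D) → D, c · sup_{𝒞 ⊆ τ(D), 𝒞 nonempty} ⟦σ(𝒞)⟧/⟦𝒞⟧ ≤ C₁ ≤ C · sup_{𝒞 ⊆ τ(D), 𝒞 nonempty} ⟦σ(𝒞)⟧/⟦𝒞⟧ (in [0,∞]). -/
open MeasureTheory Set
open scoped ENNReal NNReal Classical

noncomputable section

/-- A dyadic subinterval of `[0,1)`: the half-open interval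
`[k/2^n, (k+1)/2^n)` with `k < 2^n`. -/
structure DyadicI where
  n : ℕ
  k : ℕ
  hk : k < 2 ^ n

instance : Nonempty DyadicI := ⟨⟨0, 0, by norm_num⟩⟩

namespace DyadicI

/-- The length `|I| = 2^{-n}` of a dyadic interval. -/
def len (I : DyadicI) : ℝ := (2 : ℝ) ^ (-(I.n : ℤ))

/-- The left endpoint `k 2^{-n}` of a dyadic interval. -/
def lep (I : DyadicI) : ℝ := (I.k : ℝ) * I.len

/-- The underlying point set `[k/2^n, (k+1)/2^n)` of a dyadic interval. -/
def toSet (I : DyadicI) : Set ℝ := Set.Ico I.lep (I.lep + I.len)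

/-- The `L^∞`-normalized Haar function `h_I`: `1` on the left half of `I`,
`-1` on the right half of `I`, `0` off `I`. -/
def haar (I : DyadicI) (t : ℝ) : ℝ :=
  if t ∈ Set.Ico I.lep (I.lep + I.len / 2) then 1
  else if t ∈ Set.Ico (I.lep + I.len / 2) (I.lep + I.len) then -1
  else 0

end DyadicI

open DyadicI

section Defs

variable {X : Type*} [NormedAddCommGroup X] [NormedSpace ℝ X]

/-- The square function `𝕊(f)` of the `X`-valued Haar expansion `f = ∑_{I ∈ s} x_I h_I`:
`𝕊(f)(t) = (E_ε ‖∑_I ε_I x_I h_I(t)‖²)^{1/2}`, the average being taken over all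
choices of signs `ε_I ∈ {±1}`, `I ∈ s`. -/
def sqFn (s : Finset DyadicI) (x : DyadicI → X) (t : ℝ) : ℝ :=
  Real.sqrt ((∑ ε : {I // I ∈ s} → Bool,
    ‖∑ I ∈ s.attach, ((if ε I then (1 : ℝ) else -1) * haar I.1 t) • x I.1‖ ^ 2) /
      2 ^ s.card)

/-- The `H^p_X` (quasi-)norm of `f = ∑_{I ∈ s} x_I h_I`:
`‖f‖ = (∫₀¹ 𝕊(f)(t)^p dt)^{1/p}`. -/
def HpNormV (p : ℝ) (s : Finset DyadicI) (x : DyadicI → X) : ℝ :=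
  (∫ t in Set.Icc (0 : ℝ) 1, sqFn s x t ^ p) ^ (1 / p)

/-- The coefficients of `(T_{τ,p} ⊗ Id_X)(f)` for `f = ∑_{I ∈ s} x_I h_I`, namely
`(T_{τ,p} ⊗ Id_X)(f) = ∑_{I ∈ s} (|I|/|τ(I)|)^{1/p} x_I h_{τ(I)}`, as a family of
coefficients indexed by the Haar support `τ(s)`. -/
def rearrCoef (τ : DyadicI → DyadicI) (p : ℝ) (s : Finset DyadicI) (x : DyadicI → X) :
    DyadicI → X :=
  fun J => ∑ I ∈ s, if τ I = J then ((len I / len (τ I)) ^ (1 / p)) • x I else 0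

/-- The scalar dyadic square function `S(f) = (∑_I a_I² 1_I)^{1/2}`
of `f = ∑_{I ∈ s} a_I h_I`. -/
def sqFnS (s : Finset DyadicI) (a : DyadicI → ℝ) (t : ℝ) : ℝ :=
  Real.sqrt (∑ I ∈ s, a I ^ 2 * Set.indicator (toSet I) (fun _ => (1 : ℝ)) t)

/-- The scalar dyadic `H^p` (quasi-)norm `‖f‖_{H^p} = ‖S(f)‖_{L^p[0,1]}`. -/
def HpNormS (p : ℝ) (s : Finset DyadicI) (a : DyadicI → ℝ) : ℝ :=
  (∫ t in Set.Icc (0 : ℝ) 1, sqFnS s a t ^ p) ^ (1 / p)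

/-- The coefficients of the scalar rearrangement operator `T_{τ,p}` applied to
`f = ∑_{I ∈ s} a_I h_I`; `T_{τ,p}` is determined by
`T_{τ,p}(h_I/|I|^{1/p}) = h_{τ(I)}/|τ(I)|^{1/p}`. -/
def rearrCoefS (τ : DyadicI → DyadicI) (p : ℝ) (s : Finset DyadicI) (a : DyadicI → ℝ) :
    DyadicI → ℝ :=
  fun J => ∑ I ∈ s, if τ I = J then ((len I / len (τ I)) ^ (1 / p)) * a I else 0

/-- The operator norm `‖T_{τ,p} ⊗ Id_X : H^p_X → H^p_X‖ ∈ [0,∞]`, computed as the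
supremum over finitely supported `f` in the unit ball of `H^p_X`. -/
def hpOpNorm (τ : DyadicI → DyadicI) (p : ℝ) (X : Type*) [NormedAddCommGroup X]
    [NormedSpace ℝ X] : ℝ≥0∞ :=
  ⨆ (s : Finset DyadicI) (x : DyadicI → X) (_ : HpNormV p s x ≤ 1),
    ENNReal.ofReal (HpNormV p (s.image τ) (rearrCoef τ p s x))

/-- The scalar operator norm `‖T_{τ,p} : H^p → H^p‖ ∈ [0,∞]`. -/
def hpOpNormS (τ : DyadicI → DyadicI) (p : ℝ) : ℝ≥0∞ :=
  ⨆ (s : Finset DyadicI) (a : DyadicI → ℝ) (_ : HpNormS p s a ≤ 1),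
    ENNReal.ofReal (HpNormS p (s.image τ) (rearrCoefS τ p s a))

/-- For `H = τ(L)` (so that `σ(J) = I` for `J = τ(I)`, `I ∈ L`), the maximal function
`μ_H(t) = sup_{J ∈ H} (|σ(J)|/|J|) 1_J(t) = sup_{I ∈ L} (|I|/|τ(I)|) 1_{τ(I)}(t)`,
as an `[0,∞]`-valued function. -/
def muSet (τ : DyadicI → DyadicI) (L : Set DyadicI) (t : ℝ) : ℝ≥0∞ :=
  ⨆ (I : DyadicI) (_ : I ∈ L),
    ENNReal.ofReal (len I / len (τ I) * Set.indicator (toSet (τ I)) (fun _ => (1 : ℝ)) t)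

/-- For `H = τ(L)` with `L` finite, the (real-valued) maximal function
`μ_H(t) = max_{I ∈ L} (|I|/|τ(I)|) 1_{τ(I)}(t)`. -/
def muFin (τ : DyadicI → DyadicI) (L : Finset DyadicI) (t : ℝ) : ℝ :=
  ((L.sup fun I =>
    Real.toNNReal (len I / len (τ I) * Set.indicator (toSet (τ I)) (fun _ => (1 : ℝ)) t) : ℝ≥0) : ℝ)

/-- The point set `L* = ⋃_{I ∈ L} I` covered by a collection of dyadic intervals. -/
def pointSet (L : Set DyadicI) : Set ℝ := ⋃ I ∈ L, toSet I

/-- The constant `C₁ = sup_{H ⊆ τ(D), H ≠ ∅} (1/|σ(H)*|) ∫₀¹ μ_H(t) dt`, where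
nonempty collections `H ⊆ τ(D)` are parametrized as `H = τ(L)` for nonempty `L ⊆ D`,
so that `σ(H)* = L*`. -/
def Cone (τ : DyadicI → DyadicI) : ℝ≥0∞ :=
  ⨆ (L : Set DyadicI) (_ : L.Nonempty),
    (∫⁻ t in Set.Icc (0 : ℝ) 1, muSet τ L t) / volume (pointSet L)

/-- The square of the dyadic BMO norm of `g = ∑_{J ∈ s} a_J h_J`:
`‖g‖_{BMO}² = sup_{I ∈ D} (1/|I|) ∑_{J ⊆ I} a_J² |J|`. -/
def bmoSq (s : Finset DyadicI) (a : DyadicI → ℝ) : ℝ≥0∞ :=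
  ⨆ I : DyadicI, ENNReal.ofReal
    ((∑ J ∈ s.filter fun J => toSet J ⊆ toSet I, a J ^ 2 * len J) / len I)

/-- The coefficients of `S_σ(g)` for `g = ∑_{J ∈ s} a_J h_J`, where `σ = τ⁻¹` on `τ(D)`:
`S_σ(h_J) = h_{σ(J)}` for `J ∈ τ(D)` and `S_σ(h_J) = 0` otherwise, so that the
coefficient of `h_K` in `S_σ(g)` is `a_{τ(K)}` if `τ(K) ∈ s`, and `0` otherwise. -/
def sSigmaCoef (τ : DyadicI → DyadicI) (s : Finset DyadicI) (a : DyadicI → ℝ) :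
    DyadicI → ℝ :=
  fun K => if τ K ∈ s then a (τ K) else 0

/-- The Haar support of `S_σ(g)` for `g` with Haar support `s`:
`σ(s ∩ τ(D))`, i.e. the preimage under `τ` of `s`. -/
def sSigmaSupp (τ : DyadicI → DyadicI) (s : Finset DyadicI) : Finset DyadicI :=
  (s.filter fun J => J ∈ Set.range τ).image (Function.invFun τ)

/-- The operator norm `‖S_σ‖_{BMO} ∈ [0,∞]` of `S_σ` with respect to the dyadic BMO
norm, computed over finitely supported Haar expansions. -/
def bmoOpNorm (τ : DyadicI → DyadicI) : ℝ≥0∞ :=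
  ⨆ (s : Finset DyadicI) (a : DyadicI → ℝ) (_ : bmoSq s a ≤ 1),
    (bmoSq (sSigmaSupp τ s) (sSigmaCoef τ s a)) ^ (1 / 2 : ℝ)

/-- The Carleson constant `⟦C⟧ = sup_{I ∈ C} (1/|I|) ∑_{J ∈ C, J ⊆ I} |J| ∈ [0,∞]`
of a collection of dyadic intervals. -/
def carleson (C : Set DyadicI) : ℝ≥0∞ :=
  ⨆ (I : DyadicI) (_ : I ∈ C),
    (∑' J : {J : DyadicI // J ∈ C ∧ toSet J ⊆ toSet I}, ENNReal.ofReal (len J.1)) /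
      ENNReal.ofReal (len I)

/-- The `L^p_X = L^p([0,1]; X)` (Bochner) norm of `f = ∑_{I ∈ s} x_I h_I`. -/
def LpNormV (p : ℝ) (s : Finset DyadicI) (x : DyadicI → X) : ℝ :=
  (∫ t in Set.Icc (0 : ℝ) 1, ‖∑ I ∈ s, haar I t • x I‖ ^ p) ^ (1 / p)

/-- The operator norm `‖T_{τ,p} ⊗ Id_X : L^p_X → L^p_X‖ ∈ [0,∞]`, computed over
finitely supported Haar expansions. -/
def lpOpNorm (τ : DyadicI → DyadicI) (p : ℝ) (X : Type*) [NormedAddCommGroup X]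
    [NormedSpace ℝ X] : ℝ≥0∞ :=
  ⨆ (s : Finset DyadicI) (x : DyadicI → X) (_ : LpNormV p s x ≤ 1),
    ENNReal.ofReal (LpNormV p (s.image τ) (rearrCoef τ p s x))

/-- The operator norm `‖T_{τ,p}^{-1} ⊗ Id_X‖ ∈ [0,∞]` on the span of
`{h_J : J ∈ τ(D)}` with the `L^p_X` norm: the map determined by
`x h_{τ(I)}/|τ(I)|^{1/p} ↦ x h_I/|I|^{1/p}`, i.e. sending
`g = ∑_{I ∈ L} x_I h_{τ(I)}` to `∑_{I ∈ L} (|τ(I)|/|I|)^{1/p} x_I h_I`. -/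
def lpInvOpNorm (τ : DyadicI → DyadicI) (p : ℝ) (X : Type*) [NormedAddCommGroup X]
    [NormedSpace ℝ X] : ℝ≥0∞ :=
  ⨆ (L : Finset DyadicI) (x : DyadicI → X)
    (_ : LpNormV p (L.image τ) (fun J => ∑ I ∈ L, if τ I = J then x I else 0) ≤ 1),
    ENNReal.ofReal (LpNormV p L fun I => ((len (τ I) / len I) ^ (1 / p)) • x I)

/-- The operator norm `‖T_{τ,1}^{-1}‖₁ ∈ [0,∞]` on the span of `{h_J : J ∈ τ(D)}`
with the dyadic `H¹` norm: the map determined by `h_{τ(I)}/|τ(I)| ↦ h_I/|I|`,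
i.e. sending `g = ∑_{I ∈ L} a_I h_{τ(I)}` to `∑_{I ∈ L} (|τ(I)|/|I|) a_I h_I`. -/
def h1InvOpNorm (τ : DyadicI → DyadicI) : ℝ≥0∞ :=
  ⨆ (L : Finset DyadicI) (a : DyadicI → ℝ)
    (_ : HpNormS 1 (L.image τ) (fun J => ∑ I ∈ L, if τ I = J then a I else 0) ≤ 1),
    ENNReal.ofReal (HpNormS 1 L fun I => (len (τ I) / len I) * a I)

/-- The Rademacher average `(E_ε ‖∑_{i<n} ε_i a_i‖^p)^{1/p}` over all choices of
signs `ε_i ∈ {±1}`. -/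
def radAvg (p : ℝ) {Y : Type*} [NormedAddCommGroup Y] [NormedSpace ℝ Y] (n : ℕ)
    (a : Fin n → Y) : ℝ :=
  ((∑ ε : Fin n → Bool, ‖∑ i, (if ε i then (1 : ℝ) else -1) • a i‖ ^ p) / 2 ^ n) ^ (1 / p)

/-- The type-`p` constant `Type_p(Y) ∈ [0,∞]`: the least `C` such that
`(E_ε ‖∑ ε_i a_i‖^p)^{1/p} ≤ C (∑ ‖a_i‖^p)^{1/p}` for all finite families in `Y`. -/
def typeConst (p : ℝ) (Y : Type*) [NormedAddCommGroup Y] [NormedSpace ℝ Y] : ℝ≥0∞ :=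
  sInf {C : ℝ≥0∞ | ∀ (n : ℕ) (a : Fin n → Y),
    ENNReal.ofReal (radAvg p n a) ≤ C * ENNReal.ofReal ((∑ i, ‖a i‖ ^ p) ^ (1 / p))}

/-- The UMD property of a Banach space `E`: for each `1 < r < ∞` the Haar system is
unconditional in `L^r_E`. -/
def IsUMD (E : Type*) [NormedAddCommGroup E] [NormedSpace ℝ E] : Prop :=
  ∀ r : ℝ, 1 < r → ∃ β : ℝ, ∀ (s : Finset DyadicI) (x : DyadicI → E) (ε : DyadicI → ℝ),
    (∀ I, ε I = 1 ∨ ε I = -1) →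
    LpNormV r s (fun I => ε I • x I) ≤ β * LpNormV r s x

/-- `B` is a block in `L` with top `I`: `B ⊆ L`, `I` is the unique maximal interval
of `B`, and `B` is order-convex in `L` between its elements and `I`. -/
def IsBlock (L : Set DyadicI) (B : Set DyadicI) (I : DyadicI) : Prop :=
  B ⊆ L ∧ I ∈ B ∧ (∀ J ∈ B, toSet J ⊆ toSet I) ∧
    ∀ J ∈ B, ∀ K ∈ L, toSet J ⊆ toSet K → toSet K ⊆ toSet I → K ∈ B

/-- `G₁(K | E)`: the maximal dyadic intervals of `E` strictly contained in `K`. -/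
def gen1 (K : DyadicI) (E : Set DyadicI) : Set DyadicI :=
  {J | J ∈ E ∧ toSet J ⊂ toSet K ∧
    ∀ J' ∈ E, toSet J' ⊂ toSet K → toSet J ⊆ toSet J' → J' = J}

end Defs

section Groundwork

open DyadicI ENNReal

lemma DyadicI.ext' {I J : DyadicI} (hn : I.n = J.n) (hk : I.k = J.k) : I = J := by
  cases I; cases J; simp_all

instance : Countable DyadicI := by
  have h : Function.Injective (fun I : DyadicI => (I.n, I.k)) := by
    intro I J h
    simp only [Prod.mk.injEq] at h
    exact DyadicI.ext' h.1 h.2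
  exact h.countable

lemma DyadicI.len_pos (I : DyadicI) : 0 < len I := by
  unfold len; positivity

lemma DyadicI.len_ne_zero (I : DyadicI) : len I ≠ 0 := I.len_pos.ne'

lemma DyadicI.toSet_subset_Ico (I : DyadicI) : toSet I ⊆ Set.Ico (0:ℝ) 1 := by
  have h1 : (0:ℝ) ≤ I.lep := by
    unfold lep
    exact mul_nonneg (Nat.cast_nonneg _) I.len_pos.le
  have h2 : I.lep + I.len ≤ 1 := by
    unfold lep len
    have : ((I.k : ℝ) + 1) ≤ (2:ℝ) ^ (I.n : ℕ) := by
      have := I.hk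
      exact_mod_cast Nat.succ_le_of_lt this
    have hpow : (2:ℝ) ^ (-(I.n : ℤ)) = ((2:ℝ) ^ (I.n:ℕ))⁻¹ := by
      rw [zpow_neg, zpow_natCast]
    rw [hpow, ← add_one_mul]
    calc ((I.k:ℝ)+1) * ((2:ℝ)^(I.n:ℕ))⁻¹ ≤ (2:ℝ)^(I.n:ℕ) * ((2:ℝ)^(I.n:ℕ))⁻¹ :=
          mul_le_mul_of_nonneg_right this (by positivity)
      _ = 1 := by
          field_simp
  exact fun t ht => ⟨le_trans h1 ht.1, lt_of_lt_of_le ht.2 h2⟩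

lemma DyadicI.measurableSet_toSet (I : DyadicI) : MeasurableSet (toSet I) :=
  measurableSet_Ico

lemma DyadicI.volume_toSet (I : DyadicI) :
    MeasureTheory.volume (toSet I) = ENNReal.ofReal (len I) := by
  unfold toSet; rw [Real.volume_Ico]; congr 1; ring

lemma DyadicI.toSet_nonempty (I : DyadicI) : (toSet I).Nonempty :=
  ⟨I.lep, le_refl _, lt_add_of_pos_right _ I.len_pos⟩

lemma DyadicI.lep_add_len_eq (I : DyadicI) : I.lep + I.len = ((I.k:ℝ)+1) * I.len := by
  unfold lep; ring

lemma DyadicI.toSet_eq_iff {I J : DyadicI} (h : toSet I = toSet J) :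
    I.lep = J.lep ∧ I.len = J.len := by
  unfold toSet at h
  have h1 := (Set.Ico_eq_Ico_iff (α := ℝ) (Or.inl (lt_add_of_pos_right I.lep I.len_pos))).mp h
  exact ⟨h1.1, by linarith [h1.2]⟩

lemma DyadicI.len_inj {I J : DyadicI} (h : len I = len J) : I.n = J.n := by
  unfold len at h
  have := zpow_right_injective₀ (a := (2:ℝ)) (by norm_num) (by norm_num) h
  omega

lemma DyadicI.toSet_inj {I J : DyadicI} (h : toSet I = toSet J) : I = J := by
  obtain ⟨h1, h2⟩ := toSet_eq_iff h
  have hn := len_inj h2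
  apply DyadicI.ext' hn
  unfold lep at h1
  rw [h2] at h1
  have := mul_right_cancel₀ J.len_ne_zero h1
  exact_mod_cast this

lemma DyadicI.len_le_of_subset {I J : DyadicI} (h : toSet I ⊆ toSet J) :
    len I ≤ len J := by
  have := MeasureTheory.measure_mono (μ := MeasureTheory.volume) h
  rw [volume_toSet, volume_toSet] at this
  exact (ENNReal.ofReal_le_ofReal_iff J.len_pos.le).mp this

lemma DyadicI.eq_of_subset_of_len_le {I J : DyadicI} (h : toSet I ⊆ toSet J)
    (hl : len J ≤ len I) : I = J := by
  have hll : len I = len J := le_antisymm (len_le_of_subset h) hl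
  apply toSet_inj
  unfold toSet at h ⊢
  rw [Set.Ico_subset_Ico_iff (lt_add_of_pos_right I.lep I.len_pos)] at h
  have : I.lep = J.lep := by
    rcases h with ⟨h1, h2⟩
    rw [hll] at h2
    have : I.lep ≤ J.lep := by linarith
    linarith [le_antisymm this h1]
  rw [this, hll]

lemma DyadicI.len_lt_of_ssubset {I J : DyadicI} (h : toSet I ⊂ toSet J) :
    len I < len J := by
  rcases lt_or_ge (len I) (len J) with h' | h'
  · exact h'
  · exact absurd (eq_of_subset_of_len_le h.subset h') (by rintro rfl; exact h.ne rfl)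

end Groundwork
section Trichotomy
open DyadicI

lemma DyadicI.len_eq_mul {I J : DyadicI} (h : J.n ≤ I.n) :
    len J = ((2:ℝ) ^ (I.n - J.n : ℕ)) * len I := by
  unfold len
  rw [← zpow_natCast (2:ℝ) (I.n - J.n), ← zpow_add₀ (by norm_num : (2:ℝ) ≠ 0)]
  congr 1
  rw [Nat.cast_sub h]
  ring

lemma DyadicI.subset_or_disjoint_of_le {I J : DyadicI} (h : J.n ≤ I.n) :
    toSet I ⊆ toSet J ∨ Disjoint (toSet I) (toSet J) := by
  set q : ℕ := 2 ^ (I.n - J.n) with hq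
  have hlen : len J = (q:ℝ) * len I := by
    rw [len_eq_mul h, hq]; push_cast; ring
  have hlI : (0:ℝ) < len I := I.len_pos
  have hlepJ : J.lep = ((J.k * q : ℕ) : ℝ) * len I := by
    unfold lep; rw [hlen]; push_cast; ring
  have hlepJ2 : J.lep + len J = (((J.k + 1) * q : ℕ) : ℝ) * len I := by
    unfold lep; rw [hlen]; push_cast; ring
  have hlepI : I.lep = ((I.k : ℕ) : ℝ) * len I := by unfold lep; norm_num
  have hlepI2 : I.lep + len I = (((I.k + 1 : ℕ)) : ℝ) * len I := by
    unfold lep; push_cast; ring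
  rcases lt_or_ge I.k (J.k * q) with hc | hc
  · -- I left of J : I.k + 1 ≤ J.k * q
    right
    rw [toSet, toSet, Set.Ico_disjoint_Ico]
    have : ((I.k + 1 : ℕ) : ℝ) * len I ≤ ((J.k * q : ℕ) : ℝ) * len I := by
      apply mul_le_mul_of_nonneg_right _ hlI.le
      exact_mod_cast Nat.succ_le_of_lt hc
    rw [← hlepI2, ← hlepJ] at this
    exact le_trans (min_le_left _ _) (le_trans this (le_max_right _ _))
  rcases lt_or_ge I.k ((J.k + 1) * q) with hc2 | hc2
  · -- contained
    left
    rw [toSet, toSet]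
    apply Set.Ico_subset_Ico
    · rw [hlepJ, hlepI]
      apply mul_le_mul_of_nonneg_right _ hlI.le
      exact_mod_cast hc
    · rw [hlepJ2, hlepI2]
      apply mul_le_mul_of_nonneg_right _ hlI.le
      exact_mod_cast Nat.succ_le_of_lt hc2
  · -- I right of J
    right
    rw [toSet, toSet, Set.Ico_disjoint_Ico]
    have : (((J.k + 1) * q : ℕ) : ℝ) * len I ≤ ((I.k : ℕ) : ℝ) * len I := by
      apply mul_le_mul_of_nonneg_right _ hlI.le
      exact_mod_cast hc2
    rw [← hlepJ2, ← hlepI] at this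
    exact le_trans (min_le_right _ _) (le_trans this (le_max_left _ _))

lemma DyadicI.trichotomy (I J : DyadicI) :
    toSet I ⊆ toSet J ∨ toSet J ⊆ toSet I ∨ Disjoint (toSet I) (toSet J) := by
  rcases le_total J.n I.n with h | h
  · rcases subset_or_disjoint_of_le h with h' | h'
    · exact Or.inl h'
    · exact Or.inr (Or.inr h')
  · rcases subset_or_disjoint_of_le h with h' | h'
    · exact Or.inr (Or.inl h')
    · exact Or.inr (Or.inr h'.symm)

/-- If the sets are not disjoint, they are nested. -/
lemma DyadicI.subset_of_not_disjoint {I J : DyadicI}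
    (h : ¬ Disjoint (toSet I) (toSet J)) (hl : len I ≤ len J) :
    toSet I ⊆ toSet J := by
  rcases trichotomy I J with h' | h' | h'
  · exact h'
  · have := len_le_of_subset h'
    have heq : len I = len J := le_antisymm hl this
    exact (eq_of_subset_of_len_le h' heq.le) ▸ subset_rfl
  · exact absurd h' h

end Trichotomy
section WLemmas
open DyadicI

/-- The weight `w_I = |I|/|τ(I)|`. -/
def wt (τ : DyadicI → DyadicI) (I : DyadicI) : ℝ := len I / len (τ I)

lemma wt_pos (τ : DyadicI → DyadicI) (I : DyadicI) : 0 < wt τ I :=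
  div_pos I.len_pos (τ I).len_pos

lemma wt_eq_zpow (τ : DyadicI → DyadicI) (I : DyadicI) :
    wt τ I = (2:ℝ) ^ (((τ I).n : ℤ) - (I.n : ℤ)) := by
  unfold wt len
  rw [← zpow_sub₀ (by norm_num : (2:ℝ) ≠ 0)]
  congr 1; ring

lemma two_mul_le_of_lt {a b : ℤ} (h : (2:ℝ) ^ a < 2 ^ b) : 2 * (2:ℝ) ^ a ≤ 2 ^ b := by
  have hab : a < b := by
    by_contra hab
    push_neg at hab
    exact absurd (zpow_le_zpow_right₀ (by norm_num : (1:ℝ) ≤ 2) hab) (not_le.mpr h)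
  calc 2 * (2:ℝ) ^ a = 2 ^ (a + 1) := by
        rw [zpow_add₀ (by norm_num : (2:ℝ) ≠ 0)]; ring
    _ ≤ 2 ^ b := zpow_le_zpow_right₀ (by norm_num) (by omega)

lemma wt_double {τ : DyadicI → DyadicI} {I J : DyadicI} (h : wt τ I < wt τ J) :
    2 * wt τ I ≤ wt τ J := by
  rw [wt_eq_zpow, wt_eq_zpow] at h ⊢
  exact two_mul_le_of_lt h

lemma wt_mul_len (τ : DyadicI → DyadicI) (I : DyadicI) : wt τ I * len (τ I) = len I :=
  div_mul_cancel₀ _ (τ I).len_ne_zero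

end WLemmas

section CarlesonBasics
open DyadicI ENNReal

lemma tsum_len_subtype (𝒢 : Finset DyadicI) (P : DyadicI → Prop) :
    (∑' J : {J : DyadicI // J ∈ (↑𝒢 : Set DyadicI) ∧ P J}, ENNReal.ofReal (len J.1))
      = ∑ J ∈ 𝒢.filter P, ENNReal.ofReal (len J) := by
  classical
  rw [← Finset.tsum_subtype (𝒢.filter P) (fun J => ENNReal.ofReal (len J))]
  exact Equiv.tsum_eq (Equiv.subtypeEquivRight (q := fun x => x ∈ 𝒢.filter P)
    (fun x => by simp [Finset.mem_filter])) (fun J => ENNReal.ofReal (len J.1))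

lemma carleson_term_le {C : Set DyadicI} {I : DyadicI} (hI : I ∈ C) :
    (∑' J : {J : DyadicI // J ∈ C ∧ toSet J ⊆ toSet I}, ENNReal.ofReal (len J.1))
      ≤ carleson C * ENNReal.ofReal (len I) := by
  have h := le_iSup₂ (f := fun (I : DyadicI) (_ : I ∈ C) =>
    (∑' J : {J : DyadicI // J ∈ C ∧ toSet J ⊆ toSet I}, ENNReal.ofReal (len J.1)) /
      ENNReal.ofReal (len I)) I hI
  rw [← carleson] at h
  exact (ENNReal.div_le_iff (ENNReal.ofReal_pos.mpr I.len_pos).ne' ENNReal.ofReal_ne_top).mp h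

lemma carleson_mono {C C' : Set DyadicI} (h : C ⊆ C') : carleson C ≤ carleson C' := by
  apply iSup₂_le
  intro I hI
  have h1 : (∑' J : {J : DyadicI // J ∈ C ∧ toSet J ⊆ toSet I}, ENNReal.ofReal (len J.1))
      ≤ ∑' J : {J : DyadicI // J ∈ C' ∧ toSet J ⊆ toSet I}, ENNReal.ofReal (len J.1) := by
    exact ENNReal.tsum_comp_le_tsum_of_injective
      (f := fun J : {J : DyadicI // J ∈ C ∧ toSet J ⊆ toSet I} =>
        (⟨J.1, h J.2.1, J.2.2⟩ : {J : DyadicI // J ∈ C' ∧ toSet J ⊆ toSet I}))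
      (by
        intro a b hab
        apply Subtype.ext
        have := congrArg Subtype.val hab
        simpa using this)
      (fun J => ENNReal.ofReal (len J.1))
  refine le_trans (ENNReal.div_le_div_right h1 _) ?_
  exact le_iSup₂ (f := fun (I : DyadicI) (_ : I ∈ C') =>
    (∑' J : {J : DyadicI // J ∈ C' ∧ toSet J ⊆ toSet I}, ENNReal.ofReal (len J.1)) /
      ENNReal.ofReal (len I)) I (h hI)

lemma one_le_carleson {C : Set DyadicI} (h : C.Nonempty) : 1 ≤ carleson C := by
  obtain ⟨I, hI⟩ := h
  have h1 : ENNReal.ofReal (len I)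
      ≤ ∑' J : {J : DyadicI // J ∈ C ∧ toSet J ⊆ toSet I}, ENNReal.ofReal (len J.1) :=
    ENNReal.le_tsum (⟨I, hI, subset_rfl⟩ : {J : DyadicI // J ∈ C ∧ toSet J ⊆ toSet I})
  have h2 : (1:ℝ≥0∞) ≤
      (∑' J : {J : DyadicI // J ∈ C ∧ toSet J ⊆ toSet I}, ENNReal.ofReal (len J.1)) /
        ENNReal.ofReal (len I) := by
    rw [ENNReal.le_div_iff_mul_le (Or.inl (ENNReal.ofReal_pos.mpr I.len_pos).ne')
      (Or.inl ENNReal.ofReal_ne_top), one_mul]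
    exact h1
  exact le_trans h2 (le_iSup₂ (f := fun (I : DyadicI) (_ : I ∈ C) =>
    (∑' J : {J : DyadicI // J ∈ C ∧ toSet J ⊆ toSet I}, ENNReal.ofReal (len J.1)) /
      ENNReal.ofReal (len I)) I hI)

end CarlesonBasics
section A1
open DyadicI MeasureTheory

lemma sum_len_le_carleson_mul_volume (𝒢 : Finset DyadicI) :
    ∑ K ∈ 𝒢, ENNReal.ofReal (len K)
      ≤ carleson ↑𝒢 * volume (⋃ K ∈ 𝒢, toSet K) := by
  classical
  have hanc : ∀ K : DyadicI, ∃ M : DyadicI, K ∈ 𝒢 →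
      (M ∈ 𝒢 ∧ toSet K ⊆ toSet M ∧ ∀ M' ∈ 𝒢, toSet M ⊆ toSet M' → M' = M) := by
    intro K
    by_cases hK : K ∈ 𝒢
    · obtain ⟨M, hM, hMmax⟩ := Finset.exists_max_image
        (𝒢.filter (fun M => toSet K ⊆ toSet M)) len
        ⟨K, Finset.mem_filter.mpr ⟨hK, subset_rfl⟩⟩
      rw [Finset.mem_filter] at hM
      refine ⟨M, fun _ => ⟨hM.1, hM.2, ?_⟩⟩
      intro M' hM' hsub
      have hM'f : M' ∈ 𝒢.filter (fun M => toSet K ⊆ toSet M) :=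
        Finset.mem_filter.mpr ⟨hM', hM.2.trans hsub⟩
      exact (eq_of_subset_of_len_le hsub (hMmax M' hM'f)).symm
    · exact ⟨K, fun h => absurd h hK⟩
  choose anc hspec using hanc
  set Mset : Finset DyadicI := 𝒢.image anc with hMset
  have hmaps : ∀ K ∈ 𝒢, anc K ∈ Mset := fun K hK => Finset.mem_image_of_mem anc hK
  have hMsetP : ∀ M ∈ Mset, M ∈ 𝒢 ∧ ∀ M' ∈ 𝒢, toSet M ⊆ toSet M' → M' = M := by
    intro M hM
    obtain ⟨K, hK, rfl⟩ := Finset.mem_image.mp hM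
    exact ⟨(hspec K hK).1, (hspec K hK).2.2⟩
  calc ∑ K ∈ 𝒢, ENNReal.ofReal (len K)
      = ∑ M ∈ Mset, ∑ K ∈ 𝒢.filter (fun K => anc K = M), ENNReal.ofReal (len K) :=
        (Finset.sum_fiberwise_of_maps_to hmaps _).symm
    _ ≤ ∑ M ∈ Mset, carleson ↑𝒢 * ENNReal.ofReal (len M) := by
        apply Finset.sum_le_sum
        intro M hM
        calc ∑ K ∈ 𝒢.filter (fun K => anc K = M), ENNReal.ofReal (len K)
            ≤ ∑ K ∈ 𝒢.filter (fun K => toSet K ⊆ toSet M), ENNReal.ofReal (len K) := by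
              apply Finset.sum_le_sum_of_subset
              intro K hK
              rw [Finset.mem_filter] at hK ⊢
              refine ⟨hK.1, ?_⟩
              rcases hK with ⟨hK1, rfl⟩
              exact (hspec K hK1).2.1
          _ ≤ carleson ↑𝒢 * ENNReal.ofReal (len M) := by
              rw [← tsum_len_subtype 𝒢 (fun K => toSet K ⊆ toSet M)]
              exact carleson_term_le (Finset.mem_coe.mpr (hMsetP M hM).1)
    _ = carleson ↑𝒢 * ∑ M ∈ Mset, ENNReal.ofReal (len M) := by
        rw [Finset.mul_sum]
    _ = carleson ↑𝒢 * volume (⋃ M ∈ Mset, toSet M) := by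
        congr 1
        rw [measure_biUnion_finset]
        · exact Finset.sum_congr rfl (fun M _ => (volume_toSet M).symm)
        · intro M hM M' hM' hne
          have pM := hMsetP M (Finset.mem_coe.mp hM)
          have pM' := hMsetP M' (Finset.mem_coe.mp hM')
          rcases trichotomy M M' with h' | h' | h'
          · exact absurd (pM.2 M' pM'.1 h') hne.symm
          · exact absurd (pM'.2 M pM.1 h') hne
          · exact h'
        · exact fun M _ => measurableSet_toSet M
    _ ≤ carleson ↑𝒢 * volume (⋃ K ∈ 𝒢, toSet K) := by
        apply mul_le_mul_right
        apply measure_mono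
        apply Set.iUnion₂_subset
        intro M hM
        exact Set.subset_biUnion_of_mem (u := fun K => toSet K) (hMsetP M hM).1

end A1
section MuMeas
open DyadicI MeasureTheory

lemma measurable_muLike (g : DyadicI → DyadicI) (c : DyadicI → ℝ) (p : DyadicI → Prop) :
    Measurable fun t => ⨆ (J : DyadicI) (_ : p J),
      ENNReal.ofReal (c J * Set.indicator (toSet (g J)) (fun _ => (1:ℝ)) t) := by
  apply Measurable.iSup
  intro J
  apply Measurable.iSup
  intro _
  apply Measurable.ennreal_ofReal
  exact (measurable_const.indicator (measurableSet_toSet (g J))).const_mul (c J)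

lemma measurable_muSet (τ : DyadicI → DyadicI) (L : Set DyadicI) :
    Measurable (muSet τ L) :=
  measurable_muLike τ (fun I => len I / len (τ I)) (fun I => I ∈ L)

end MuMeas

section WInduction
open DyadicI MeasureTheory

lemma Wlemma (τ : DyadicI → DyadicI) (D : ℝ≥0∞) :
    ∀ (N : ℕ) (B : Finset DyadicI), B.card ≤ N →
    (∀ B' ⊆ B, ∑ J ∈ B', ENNReal.ofReal (len (τ J))
        ≤ D * volume (⋃ J ∈ B', toSet (τ J))) →
    ∀ (ω : DyadicI → ℝ), (∀ J ∈ B, 0 ≤ ω J) →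
    ∑ J ∈ B, ENNReal.ofReal (ω J * len (τ J)) ≤
      D * ∫⁻ t in Set.Icc (0:ℝ) 1, ⨆ (J : DyadicI) (_ : J ∈ B),
        ENNReal.ofReal (ω J * Set.indicator (toSet (τ J)) (fun _ => (1:ℝ)) t) := by
  intro N
  induction N with
  | zero =>
    intro B hcard _ ω _
    have : B = ∅ := Finset.card_eq_zero.mp (Nat.le_zero.mp hcard)
    subst this
    simp
  | succ N ih =>
    intro B hcard hcar ω hω
    rcases Finset.eq_empty_or_nonempty B with rfl | hne
    · simp
    obtain ⟨J₀, hJ₀, hmin⟩ := Finset.exists_min_image B ω hne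
    set m := ω J₀ with hm
    have hm0 : 0 ≤ m := hω J₀ hJ₀
    set B'' := B.filter (fun J => m < ω J) with hB''
    have hsub : B'' ⊆ B := Finset.filter_subset _ _
    have hJ₀nmem : J₀ ∉ B'' := by
      rw [hB'', Finset.mem_filter]
      exact fun h => lt_irrefl m h.2
    have hcard'' : B''.card ≤ N := by
      have : B''.card < B.card := Finset.card_lt_card ⟨hsub, fun h => hJ₀nmem (h hJ₀)⟩
      omega
    -- the U-set
    set U : Set ℝ := ⋃ J ∈ B, toSet (τ J) with hU
    have hUmeas : MeasurableSet U := by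
      apply Set.Finite.measurableSet_biUnion (B.finite_toSet)
      exact fun J _ => measurableSet_toSet (τ J)
    have hUIcc : U ⊆ Set.Icc (0:ℝ) 1 := by
      apply Set.iUnion₂_subset
      intro J _
      exact (toSet_subset_Ico (τ J)).trans Set.Ico_subset_Icc_self
    -- decompose the sum
    have hsplit : ∑ J ∈ B, ENNReal.ofReal (ω J * len (τ J)) =
        (∑ J ∈ B'', ENNReal.ofReal ((ω J - m) * len (τ J)))
          + ∑ J ∈ B, ENNReal.ofReal (m * len (τ J)) := by
      have h1 : ∀ J ∈ B, ENNReal.ofReal (ω J * len (τ J)) =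
          ENNReal.ofReal ((ω J - m) * len (τ J)) + ENNReal.ofReal (m * len (τ J)) := by
        intro J hJ
        rw [← ENNReal.ofReal_add (mul_nonneg (sub_nonneg.mpr (hmin J hJ)) (τ J).len_pos.le)
          (mul_nonneg hm0 (τ J).len_pos.le)]
        congr 1; ring
      rw [Finset.sum_congr rfl h1, Finset.sum_add_distrib]
      congr 1
      apply (Finset.sum_subset hsub ?_).symm
      intro J hJ hJn
      have h1 : ¬ m < ω J := fun hc => hJn (Finset.mem_filter.mpr ⟨hJ, hc⟩)
      have : ω J = m := le_antisymm (not_lt.mp h1) (hmin J hJ)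
      rw [this]; simp
    -- IH applied to B''
    have hIH := ih B'' hcard'' (fun B' hB' => hcar B' (hB'.trans hsub))
      (fun J => ω J - m) (fun J hJ => sub_nonneg.mpr (le_of_lt (Finset.mem_filter.mp hJ).2))
    -- the m-part
    have hmpart : ∑ J ∈ B, ENNReal.ofReal (m * len (τ J))
        ≤ D * (ENNReal.ofReal m * volume U) := by
      have h1 : ∑ J ∈ B, ENNReal.ofReal (m * len (τ J))
          = ENNReal.ofReal m * ∑ J ∈ B, ENNReal.ofReal (len (τ J)) := by
        rw [Finset.mul_sum]
        exact Finset.sum_congr rfl (fun J _ => ENNReal.ofReal_mul hm0)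
      rw [h1]
      calc ENNReal.ofReal m * ∑ J ∈ B, ENNReal.ofReal (len (τ J))
          ≤ ENNReal.ofReal m * (D * volume U) :=
            mul_le_mul_right (hcar B subset_rfl) _
        _ = D * (ENNReal.ofReal m * volume U) := by ring
    -- indicator representation of m * volume U
    have hind : ENNReal.ofReal m * volume U
        = ∫⁻ t in Set.Icc (0:ℝ) 1, U.indicator (fun _ => ENNReal.ofReal m) t := by
      rw [lintegral_indicator_const hUmeas, Measure.restrict_apply hUmeas,
        Set.inter_eq_self_of_subset_left hUIcc]
    -- pointwise inequality
    have hpoint : ∀ t, (⨆ (J : DyadicI) (_ : J ∈ B''),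
          ENNReal.ofReal ((ω J - m) * Set.indicator (toSet (τ J)) (fun _ => (1:ℝ)) t))
          + U.indicator (fun _ => ENNReal.ofReal m) t
        ≤ ⨆ (J : DyadicI) (_ : J ∈ B),
          ENNReal.ofReal (ω J * Set.indicator (toSet (τ J)) (fun _ => (1:ℝ)) t) := by
      intro t
      by_cases htU : t ∈ U
      · have htU' : t ∈ ⋃ J ∈ B, toSet (τ J) := hU ▸ htU
        obtain ⟨J₁, hJ₁, htJ₁⟩ := Set.mem_iUnion₂.mp htU'
        have hterm : ∀ J ∈ B, t ∈ toSet (τ J) → ENNReal.ofReal (ω J)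
            ≤ ⨆ (J : DyadicI) (_ : J ∈ B),
              ENNReal.ofReal (ω J * Set.indicator (toSet (τ J)) (fun _ => (1:ℝ)) t) := by
          intro J hJ htJ
          refine le_trans (le_of_eq ?_) (le_iSup₂ (f := fun (J : DyadicI) (_ : J ∈ B) =>
            ENNReal.ofReal (ω J * Set.indicator (toSet (τ J)) (fun _ => (1:ℝ)) t)) J hJ)
          rw [Set.indicator_of_mem htJ, mul_one]
        rw [Set.indicator_of_mem htU, ENNReal.iSup_add]
        apply iSup_le
        intro J
        by_cases hJ : J ∈ B''
        · rw [iSup_pos hJ]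
          by_cases htJ : t ∈ toSet (τ J)
          · rw [Set.indicator_of_mem htJ, mul_one,
              ← ENNReal.ofReal_add (sub_nonneg.mpr (hmin J (hsub hJ))) hm0, sub_add_cancel]
            exact hterm J (hsub hJ) htJ
          · rw [Set.indicator_of_notMem htJ, mul_zero, ENNReal.ofReal_zero, zero_add]
            exact le_trans (ENNReal.ofReal_le_ofReal (hmin J₁ hJ₁)) (hterm J₁ hJ₁ htJ₁)
        · rw [iSup_neg hJ]
          have := le_trans (ENNReal.ofReal_le_ofReal (hmin J₁ hJ₁)) (hterm J₁ hJ₁ htJ₁)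
          simpa using this
      · rw [Set.indicator_of_notMem htU, add_zero]
        apply iSup₂_le
        intro J hJ
        have htJ : t ∉ toSet (τ J) := by
          intro ht
          exact htU (Set.mem_biUnion (hsub hJ) ht)
        rw [Set.indicator_of_notMem htJ, mul_zero, ENNReal.ofReal_zero]
        exact zero_le
    -- put it together
    rw [hsplit]
    calc (∑ J ∈ B'', ENNReal.ofReal ((ω J - m) * len (τ J)))
          + ∑ J ∈ B, ENNReal.ofReal (m * len (τ J))
        ≤ (D * ∫⁻ t in Set.Icc (0:ℝ) 1, ⨆ (J : DyadicI) (_ : J ∈ B''),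
            ENNReal.ofReal ((ω J - m) * Set.indicator (toSet (τ J)) (fun _ => (1:ℝ)) t))
          + D * (ENNReal.ofReal m * volume U) := add_le_add hIH hmpart
      _ = D * ((∫⁻ t in Set.Icc (0:ℝ) 1, ⨆ (J : DyadicI) (_ : J ∈ B''),
            ENNReal.ofReal ((ω J - m) * Set.indicator (toSet (τ J)) (fun _ => (1:ℝ)) t))
          + ∫⁻ t in Set.Icc (0:ℝ) 1, U.indicator (fun _ => ENNReal.ofReal m) t) := by
            rw [hind]; ring
      _ = D * ∫⁻ t in Set.Icc (0:ℝ) 1, ((⨆ (J : DyadicI) (_ : J ∈ B''),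
            ENNReal.ofReal ((ω J - m) * Set.indicator (toSet (τ J)) (fun _ => (1:ℝ)) t))
          + U.indicator (fun _ => ENNReal.ofReal m) t) := by
            congr 1
            rw [← lintegral_add_left (measurable_muLike τ (fun J => ω J - m)
              (fun J => J ∈ B''))]
      _ ≤ D * ∫⁻ t in Set.Icc (0:ℝ) 1, ⨆ (J : DyadicI) (_ : J ∈ B),
            ENNReal.ofReal (ω J * Set.indicator (toSet (τ J)) (fun _ => (1:ℝ)) t) := by
            apply mul_le_mul_right
            exact lintegral_mono hpoint

end WInduction
section DirA
open DyadicI MeasureTheory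

lemma pointSet_subset_Icc (L : Set DyadicI) : pointSet L ⊆ Set.Icc (0:ℝ) 1 := by
  apply Set.iUnion₂_subset
  intro J _
  exact (toSet_subset_Ico J).trans Set.Ico_subset_Icc_self

lemma volume_pointSet_ne_top (L : Set DyadicI) : volume (pointSet L) ≠ ⊤ := by
  apply ne_of_lt
  calc volume (pointSet L) ≤ volume (Set.Icc (0:ℝ) 1) :=
        measure_mono (pointSet_subset_Icc L)
    _ < ⊤ := by rw [Real.volume_Icc]; exact ENNReal.ofReal_lt_top

lemma volume_pointSet_ne_zero {L : Set DyadicI} (h : L.Nonempty) :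
    volume (pointSet L) ≠ 0 := by
  obtain ⟨J, hJ⟩ := h
  have : volume (toSet J) ≤ volume (pointSet L) :=
    measure_mono (Set.subset_biUnion_of_mem hJ)
  rw [volume_toSet] at this
  exact fun h0 => by
    rw [h0] at this
    exact absurd (le_antisymm this zero_le)
      (ENNReal.ofReal_pos.mpr J.len_pos).ne'

lemma lintegral_muSet_le (τ : DyadicI → DyadicI) {L : Set DyadicI} (h : L.Nonempty) :
    ∫⁻ t in Set.Icc (0:ℝ) 1, muSet τ L t ≤ Cone τ * volume (pointSet L) := by
  have h1 : (∫⁻ t in Set.Icc (0:ℝ) 1, muSet τ L t) / volume (pointSet L) ≤ Cone τ :=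
    le_iSup₂ (f := fun (L : Set DyadicI) (_ : L.Nonempty) =>
      (∫⁻ t in Set.Icc (0:ℝ) 1, muSet τ L t) / volume (pointSet L)) L h
  exact (ENNReal.div_le_iff (volume_pointSet_ne_zero h) (volume_pointSet_ne_top L)).mp h1

lemma finA (τ : DyadicI → DyadicI) (hτ : Function.Injective τ) (L : Set DyadicI)
    (I₀ : DyadicI) (B : Finset DyadicI)
    (hB : ∀ J ∈ B, J ∈ L ∧ toSet J ⊆ toSet I₀) :
    ∑ J ∈ B, ENNReal.ofReal (len J)
      ≤ Cone τ * carleson (τ '' L) * ENNReal.ofReal (len I₀) := by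
  classical
  rcases Finset.eq_empty_or_nonempty B with rfl | hne
  · simp
  have hcar : ∀ B' ⊆ B, ∑ J ∈ B', ENNReal.ofReal (len (τ J))
      ≤ carleson (τ '' L) * volume (⋃ J ∈ B', toSet (τ J)) := by
    intro B' hB'
    have h1 : ∑ J ∈ B', ENNReal.ofReal (len (τ J))
        = ∑ K ∈ B'.image τ, ENNReal.ofReal (len K) :=
      (Finset.sum_image (f := fun K => ENNReal.ofReal (len K)) (fun a _ b _ h => hτ h)).symm
    rw [h1]
    refine le_trans (sum_len_le_carleson_mul_volume (B'.image τ)) ?_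
    apply mul_le_mul'
    · apply carleson_mono
      intro x hx
      rw [Finset.mem_coe, Finset.mem_image] at hx
      obtain ⟨J, hJ, rfl⟩ := hx
      exact ⟨J, (hB J (hB' hJ)).1, rfl⟩
    · apply le_of_eq
      congr 1
      ext t
      simp [Finset.mem_image]
  have hW := Wlemma τ (carleson (τ '' L)) B.card B le_rfl hcar
    (fun J => len J / len (τ J)) (fun J _ => (div_pos J.len_pos (τ J).len_pos).le)
  have hWl : ∑ J ∈ B, ENNReal.ofReal (len J)
      ≤ carleson (τ '' L) * ∫⁻ t in Set.Icc (0:ℝ) 1, muSet τ ↑B t := by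
    refine le_trans (le_of_eq ?_) hW
    apply Finset.sum_congr rfl
    intro J _
    rw [div_mul_cancel₀ _ (τ J).len_ne_zero]
  have hInt : ∫⁻ t in Set.Icc (0:ℝ) 1, muSet τ ↑B t
      ≤ Cone τ * volume (pointSet ↑B) :=
    lintegral_muSet_le τ (by exact_mod_cast hne.to_set)
  have hvol : volume (pointSet (↑B : Set DyadicI)) ≤ ENNReal.ofReal (len I₀) := by
    rw [← volume_toSet]
    apply measure_mono
    apply Set.iUnion₂_subset
    intro J hJ
    exact (hB J (Finset.mem_coe.mp hJ)).2
  calc ∑ J ∈ B, ENNReal.ofReal (len J)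
      ≤ carleson (τ '' L) * (Cone τ * volume (pointSet ↑B)) :=
        le_trans hWl (mul_le_mul_right hInt _)
    _ ≤ carleson (τ '' L) * (Cone τ * ENNReal.ofReal (len I₀)) :=
        mul_le_mul_right (mul_le_mul_right hvol _) _
    _ = Cone τ * carleson (τ '' L) * ENNReal.ofReal (len I₀) := by ring

lemma dirA (τ : DyadicI → DyadicI) (hτ : Function.Injective τ) (L : Set DyadicI) :
    carleson L ≤ Cone τ * carleson (τ '' L) := by
  apply iSup₂_le
  intro I₀ hI₀
  rw [ENNReal.div_le_iff (ENNReal.ofReal_pos.mpr I₀.len_pos).ne' ENNReal.ofReal_ne_top]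
  rw [ENNReal.tsum_eq_iSup_sum]
  apply iSup_le
  intro s
  have h1 : ∑ j ∈ s, ENNReal.ofReal (len j.1)
      = ∑ J ∈ s.image Subtype.val, ENNReal.ofReal (len J) :=
    (Finset.sum_image (f := fun K => ENNReal.ofReal (len K)) (fun a _ b _ h => Subtype.ext h)).symm
  rw [h1]
  apply finA τ hτ L I₀
  intro J hJ
  rw [Finset.mem_image] at hJ
  obtain ⟨j, _, rfl⟩ := hJ
  exact j.2

end DirA
section DirB
open DyadicI MeasureTheory

variable {τ : DyadicI → DyadicI}

/-- the pruned family `F₁`. -/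
def pruneF (τ : DyadicI → DyadicI) (F : Finset DyadicI) : Finset DyadicI :=
  F.filter (fun I => ∀ J ∈ F, toSet (τ I) ⊂ toSet (τ J) → wt τ J < wt τ I)

/-- The free part of `τ I` relative to the pruned family. -/
def freeA (τ : DyadicI → DyadicI) (F : Finset DyadicI) (I : DyadicI) : Set ℝ :=
  toSet (τ I) \
    ⋃ J ∈ (pruneF τ F).filter (fun J => toSet (τ J) ⊂ toSet (τ I)), toSet (τ J)

lemma measurableSet_freeA (F : Finset DyadicI) (I : DyadicI) :
    MeasurableSet (freeA τ F I) := by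
  apply MeasurableSet.diff (measurableSet_toSet _)
  apply Set.Finite.measurableSet_biUnion (Finset.finite_toSet _)
  exact fun J _ => measurableSet_toSet (τ J)

lemma freeA_subset (F : Finset DyadicI) (I : DyadicI) :
    freeA τ F I ⊆ toSet (τ I) := Set.diff_subset

lemma freeA_disjoint (hτ : Function.Injective τ) (F : Finset DyadicI)
    {I J : DyadicI} (hI : I ∈ pruneF τ F) (hJ : J ∈ pruneF τ F) (hne : I ≠ J) :
    Disjoint (freeA τ F I) (freeA τ F J) := by
  have hne' : toSet (τ I) ≠ toSet (τ J) := fun h => hne (hτ (toSet_inj h))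
  rcases trichotomy (τ I) (τ J) with h | h | h
  · have hss : toSet (τ I) ⊂ toSet (τ J) := ssubset_of_subset_of_ne h hne'
    rw [Set.disjoint_left]
    intro t htI htJ
    exact htJ.2 (Set.mem_biUnion (Finset.mem_filter.mpr ⟨hI, hss⟩) (freeA_subset F I htI))
  · have hss : toSet (τ J) ⊂ toSet (τ I) := ssubset_of_subset_of_ne h hne'.symm
    rw [Set.disjoint_right]
    intro t htJ htI
    exact htI.2 (Set.mem_biUnion (Finset.mem_filter.mpr ⟨hJ, hss⟩) (freeA_subset F J htJ))
  · exact h.mono (freeA_subset F I) (freeA_subset F J)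

/-- sparse members. -/
def sparseF (τ : DyadicI → DyadicI) (F : Finset DyadicI) : Finset DyadicI :=
  (pruneF τ F).filter
    (fun I => ENNReal.ofReal (len (τ I)) ≤ 4 * volume (freeA τ F I))

/-- children of `I` in the pruned family. -/
def chF (τ : DyadicI → DyadicI) (F : Finset DyadicI) (I : DyadicI) : Finset DyadicI :=
  (pruneF τ F).filter (fun J => toSet (τ J) ⊂ toSet (τ I) ∧
    ∀ K ∈ pruneF τ F, toSet (τ J) ⊂ toSet (τ K) → ¬ toSet (τ K) ⊂ toSet (τ I))

lemma wt_lt_of_prune {F : Finset DyadicI} {I J : DyadicI} (hJ : J ∈ pruneF τ F)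
    (hI : I ∈ F) (hss : toSet (τ J) ⊂ toSet (τ I)) : wt τ I < wt τ J :=
  (Finset.mem_filter.mp hJ).2 I hI hss

lemma climb_prune {F : Finset DyadicI} {I : DyadicI} (hI : I ∈ F) :
    ∃ I' ∈ pruneF τ F, toSet (τ I) ⊆ toSet (τ I') ∧ wt τ I ≤ wt τ I' := by
  classical
  obtain ⟨I', hI', hmax⟩ := Finset.exists_max_image
    (F.filter (fun J => toSet (τ I) ⊆ toSet (τ J) ∧ wt τ I ≤ wt τ J))
    (fun J => len (τ J)) ⟨I, Finset.mem_filter.mpr ⟨hI, subset_rfl, le_rfl⟩⟩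
  rw [Finset.mem_filter] at hI'
  refine ⟨I', Finset.mem_filter.mpr ⟨hI'.1, ?_⟩, hI'.2.1, hI'.2.2⟩
  intro K hK hss
  by_contra hw
  push_neg at hw
  have hKmem : K ∈ F.filter (fun J => toSet (τ I) ⊆ toSet (τ J) ∧ wt τ I ≤ wt τ J) :=
    Finset.mem_filter.mpr ⟨hK, hI'.2.1.trans hss.subset, hI'.2.2.trans hw⟩
  have h1 := hmax K hKmem
  have h2 := len_lt_of_ssubset hss
  linarith

lemma muSet_prune (τ : DyadicI → DyadicI) (F : Finset DyadicI) (t : ℝ) :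
    muSet τ ↑F t = muSet τ ↑(pruneF τ F) t := by
  apply le_antisymm
  · apply iSup₂_le
    intro I hI
    obtain ⟨I', hI', hsub, hw⟩ := climb_prune (τ := τ) (Finset.mem_coe.mp hI)
    by_cases ht : t ∈ toSet (τ I)
    · refine le_trans ?_ (le_iSup₂ (f := fun (J : DyadicI) (_ : J ∈ (↑(pruneF τ F) : Set DyadicI)) =>
        ENNReal.ofReal (len J / len (τ J) *
          Set.indicator (toSet (τ J)) (fun _ => (1:ℝ)) t)) I' (Finset.mem_coe.mpr hI'))
      rw [Set.indicator_of_mem ht, Set.indicator_of_mem (hsub ht), mul_one, mul_one]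
      exact ENNReal.ofReal_le_ofReal hw
    · rw [Set.indicator_of_notMem ht, mul_zero, ENNReal.ofReal_zero]
      exact zero_le
  · apply iSup₂_le
    intro I hI
    exact le_iSup₂ (f := fun (J : DyadicI) (_ : J ∈ (↑F : Set DyadicI)) =>
      ENNReal.ofReal (len J / len (τ J) * Set.indicator (toSet (τ J)) (fun _ => (1:ℝ)) t)) I
      (Finset.mem_coe.mpr (Finset.filter_subset _ _ (Finset.mem_coe.mp hI)))

end DirB
section DirB2
open DyadicI MeasureTheory

variable {τ : DyadicI → DyadicI}

lemma chF_subset (F : Finset DyadicI) (I : DyadicI) : chF τ F I ⊆ pruneF τ F :=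
  Finset.filter_subset _ _

lemma chF_cover {F : Finset DyadicI} {I : DyadicI} :
    ⋃ J ∈ (pruneF τ F).filter (fun J => toSet (τ J) ⊂ toSet (τ I)), toSet (τ J)
      = ⋃ J ∈ chF τ F I, toSet (τ J) := by
  classical
  apply subset_antisymm
  · apply Set.iUnion₂_subset
    intro J hJ
    rw [Finset.mem_filter] at hJ
    obtain ⟨hJ1, hJ2⟩ := hJ
    obtain ⟨K, hK, hKmax⟩ := Finset.exists_max_image
      ((pruneF τ F).filter (fun K => toSet (τ J) ⊆ toSet (τ K) ∧ toSet (τ K) ⊂ toSet (τ I)))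
      (fun K => len (τ K)) ⟨J, Finset.mem_filter.mpr ⟨hJ1, subset_rfl, hJ2⟩⟩
    rw [Finset.mem_filter] at hK
    have hKch : K ∈ chF τ F I := by
      rw [chF, Finset.mem_filter]
      refine ⟨hK.1, hK.2.2, ?_⟩
      intro K' hK' hss hss'
      have hK'mem : K' ∈ (pruneF τ F).filter
          (fun K => toSet (τ J) ⊆ toSet (τ K) ∧ toSet (τ K) ⊂ toSet (τ I)) :=
        Finset.mem_filter.mpr ⟨hK', hK.2.1.trans hss.subset, hss'⟩
      have h1 := hKmax K' hK'mem
      have h2 := len_lt_of_ssubset hss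
      linarith
    exact hK.2.1.trans (Set.subset_biUnion_of_mem (u := fun J => toSet (τ J)) hKch)
  · apply Set.iUnion₂_subset
    intro J hJ
    rw [chF, Finset.mem_filter] at hJ
    exact Set.subset_biUnion_of_mem (u := fun J => toSet (τ J))
      (Finset.mem_filter.mpr ⟨hJ.1, hJ.2.1⟩)

lemma chF_img_disjoint (hτ : Function.Injective τ) {F : Finset DyadicI} {I : DyadicI}
    {J J' : DyadicI} (hJ : J ∈ chF τ F I) (hJ' : J' ∈ chF τ F I) (hne : J ≠ J') :
    Disjoint (toSet (τ J)) (toSet (τ J')) := by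
  rw [chF, Finset.mem_filter] at hJ hJ'
  have hne' : toSet (τ J) ≠ toSet (τ J') := fun h => hne (hτ (toSet_inj h))
  rcases trichotomy (τ J) (τ J') with h | h | h
  · exact absurd hJ'.2.1 (hJ.2.2 J' hJ'.1 (ssubset_of_subset_of_ne h hne'))
  · exact absurd hJ.2.1 (hJ'.2.2 J hJ.1 (ssubset_of_subset_of_ne h hne'.symm))
  · exact h

lemma chF_parent_unique (hτ : Function.Injective τ) {F : Finset DyadicI}
    {I I' : DyadicI} (hI : I ∈ pruneF τ F) (hI' : I' ∈ pruneF τ F) (hne : I ≠ I')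
    {J : DyadicI} (hJ : J ∈ chF τ F I) (hJ' : J ∈ chF τ F I') : False := by
  rw [chF, Finset.mem_filter] at hJ hJ'
  have hne' : toSet (τ I) ≠ toSet (τ I') := fun h => hne (hτ (toSet_inj h))
  rcases trichotomy (τ I) (τ I') with h | h | h
  · exact hJ'.2.2 I hI hJ.2.1 (ssubset_of_subset_of_ne h hne')
  · exact hJ.2.2 I' hI' hJ'.2.1 (ssubset_of_subset_of_ne h hne'.symm)
  · exact (h.ne_of_mem (hJ.2.1.subset (toSet_nonempty (τ J)).some_mem)
      (hJ'.2.1.subset (toSet_nonempty (τ J)).some_mem)) rfl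

lemma dense_ineq (hτ : Function.Injective τ) {F : Finset DyadicI} {I : DyadicI}
    (hI : I ∈ pruneF τ F) (hId : ¬ ENNReal.ofReal (len (τ I)) ≤ 4 * volume (freeA τ F I)) :
    len I ≤ (2/3) * ∑ J ∈ chF τ F I, len J := by
  classical
  set u : ℝ := ∑ J ∈ chF τ F I, len (τ J) with hu
  have hu0 : 0 ≤ u := Finset.sum_nonneg (fun J _ => (τ J).len_pos.le)
  have hUsub : (⋃ J ∈ chF τ F I, toSet (τ J)) ⊆ toSet (τ I) := by
    apply Set.iUnion₂_subset
    intro J hJ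
    rw [chF, Finset.mem_filter] at hJ
    exact hJ.2.1.subset
  have hUvol : volume (⋃ J ∈ chF τ F I, toSet (τ J)) = ENNReal.ofReal u := by
    rw [measure_biUnion_finset ?_ (fun J _ => measurableSet_toSet (τ J))]
    · rw [hu, ENNReal.ofReal_sum_of_nonneg (fun J _ => (τ J).len_pos.le)]
      exact Finset.sum_congr rfl (fun J _ => volume_toSet (τ J))
    · intro J hJ J' hJ' hne
      exact chF_img_disjoint hτ (Finset.mem_coe.mp hJ) (Finset.mem_coe.mp hJ') hne
  have hule : u ≤ len (τ I) := by
    have : volume (⋃ J ∈ chF τ F I, toSet (τ J)) ≤ volume (toSet (τ I)) :=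
      measure_mono hUsub
    rw [hUvol, volume_toSet] at this
    exact (ENNReal.ofReal_le_ofReal_iff (τ I).len_pos.le).mp this
  have hAvol : volume (freeA τ F I) = ENNReal.ofReal (len (τ I) - u) := by
    rw [freeA, chF_cover (I := I),
      measure_diff hUsub (by
        apply MeasurableSet.nullMeasurableSet
        apply Set.Finite.measurableSet_biUnion (Finset.finite_toSet _)
        exact fun J _ => measurableSet_toSet (τ J))
      (by rw [hUvol]; exact ENNReal.ofReal_ne_top),
      hUvol, volume_toSet, ENNReal.ofReal_sub _ hu0]
  -- dense condition in ℝ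
  have hdense : len (τ I) > 4 * (len (τ I) - u) := by
    by_contra h
    push_neg at h
    apply hId
    rw [hAvol]
    calc ENNReal.ofReal (len (τ I)) ≤ ENNReal.ofReal (4 * (len (τ I) - u)) :=
          ENNReal.ofReal_le_ofReal h
      _ = 4 * ENNReal.ofReal (len (τ I) - u) := by
          rw [ENNReal.ofReal_mul (by norm_num)]
          norm_num
  have h34 : len (τ I) < (4/3) * u := by linarith
  -- per-child weight doubling
  have hIF : I ∈ F := by
    have hI' := hI
    rw [pruneF, Finset.mem_filter] at hI'
    exact hI'.1
  have hwt : ∀ J ∈ chF τ F I, 2 * wt τ I ≤ wt τ J := by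
    intro J hJ
    rw [chF, Finset.mem_filter] at hJ
    exact wt_double (wt_lt_of_prune hJ.1 hIF hJ.2.1)
  calc len I = wt τ I * len (τ I) := (wt_mul_len τ I).symm
    _ ≤ wt τ I * ((4/3) * u) :=
        mul_le_mul_of_nonneg_left h34.le (wt_pos τ I).le
    _ = (4/3) * ∑ J ∈ chF τ F I, wt τ I * len (τ J) := by
        have h0 : wt τ I * ((4/3) * u) = (4/3) * (wt τ I * u) := by ring
        rw [h0, hu, Finset.mul_sum]
    _ ≤ (4/3) * ∑ J ∈ chF τ F I, (wt τ J / 2) * len (τ J) := by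
        apply mul_le_mul_of_nonneg_left _ (by norm_num)
        apply Finset.sum_le_sum
        intro J hJ
        apply mul_le_mul_of_nonneg_right _ (τ J).len_pos.le
        linarith [hwt J hJ]
    _ = (2/3) * ∑ J ∈ chF τ F I, len J := by
        rw [Finset.mul_sum, Finset.mul_sum]
        apply Finset.sum_congr rfl
        intro J _
        rw [← wt_mul_len τ J]
        ring

end DirB2
section DirB3
open DyadicI MeasureTheory

variable {τ : DyadicI → DyadicI}

lemma sparseF_subset_prune (F : Finset DyadicI) : sparseF τ F ⊆ pruneF τ F :=
  Finset.filter_subset _ _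

lemma pruneF_subset (F : Finset DyadicI) : pruneF τ F ⊆ F :=
  Finset.filter_subset _ _

lemma sparse_carleson (hτ : Function.Injective τ) (F : Finset DyadicI) :
    carleson ↑((sparseF τ F).image τ) ≤ 4 := by
  classical
  apply iSup₂_le
  intro K hK
  rw [Finset.mem_coe, Finset.mem_image] at hK
  obtain ⟨I₀, hI₀, rfl⟩ := hK
  apply ENNReal.div_le_of_le_mul
  rw [tsum_len_subtype ((sparseF τ F).image τ) (fun J => toSet J ⊆ toSet (τ I₀)),
    Finset.filter_image,
    Finset.sum_image (f := fun K => ENNReal.ofReal (len K)) (fun a _ b _ h => hτ h)]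
  have hmem : ∀ J ∈ (sparseF τ F).filter (fun a => toSet (τ a) ⊆ toSet (τ I₀)),
      J ∈ pruneF τ F ∧ ENNReal.ofReal (len (τ J)) ≤ 4 * volume (freeA τ F J) ∧
        toSet (τ J) ⊆ toSet (τ I₀) := by
    intro J hJ
    rw [Finset.mem_filter] at hJ
    have hJ1 := hJ.1
    rw [sparseF, Finset.mem_filter] at hJ1
    exact ⟨hJ1.1, hJ1.2, hJ.2⟩
  calc ∑ J ∈ (sparseF τ F).filter (fun a => toSet (τ a) ⊆ toSet (τ I₀)),
        ENNReal.ofReal (len (τ J))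
      ≤ ∑ J ∈ (sparseF τ F).filter (fun a => toSet (τ a) ⊆ toSet (τ I₀)),
        4 * volume (freeA τ F J) :=
        Finset.sum_le_sum (fun J hJ => (hmem J hJ).2.1)
    _ = 4 * ∑ J ∈ (sparseF τ F).filter (fun a => toSet (τ a) ⊆ toSet (τ I₀)),
        volume (freeA τ F J) := (Finset.mul_sum _ _ _).symm
    _ = 4 * volume (⋃ J ∈ (sparseF τ F).filter (fun a => toSet (τ a) ⊆ toSet (τ I₀)),
        freeA τ F J) := by
        congr 1
        rw [measure_biUnion_finset]
        · intro J hJ J' hJ' hne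
          exact freeA_disjoint hτ F (hmem J (Finset.mem_coe.mp hJ)).1
            (hmem J' (Finset.mem_coe.mp hJ')).1 hne
        · exact fun J _ => measurableSet_freeA F J
    _ ≤ 4 * volume (toSet (τ I₀)) := by
        apply mul_le_mul_right
        apply measure_mono
        apply Set.iUnion₂_subset
        intro J hJ
        exact (freeA_subset F J).trans (hmem J hJ).2.2
    _ = 4 * ENNReal.ofReal (len (τ I₀)) := by rw [volume_toSet]

lemma sparse_sum (hτ : Function.Injective τ) (Q : ℝ≥0∞)
    (hQ : ∀ S : Finset DyadicI, S.Nonempty → carleson ↑S ≤ Q * carleson (τ '' ↑S))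
    (F : Finset DyadicI) :
    ∑ I ∈ sparseF τ F, ENNReal.ofReal (len I) ≤ 4 * Q * volume (pointSet ↑F) := by
  rcases Finset.eq_empty_or_nonempty (sparseF τ F) with he | hne
  · rw [he]; simp
  have h2 : carleson ↑(sparseF τ F) ≤ Q * 4 := by
    refine le_trans (hQ _ hne) ?_
    apply mul_le_mul_right
    rw [← Finset.coe_image]
    exact sparse_carleson hτ F
  have h3 : volume (⋃ K ∈ sparseF τ F, toSet K) ≤ volume (pointSet ↑F) := by
    apply measure_mono
    apply Set.iUnion₂_subset
    intro K hK
    exact Set.subset_biUnion_of_mem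
      (Finset.mem_coe.mpr (pruneF_subset F (sparseF_subset_prune F hK)))
  calc ∑ I ∈ sparseF τ F, ENNReal.ofReal (len I)
      ≤ carleson ↑(sparseF τ F) * volume (⋃ K ∈ sparseF τ F, toSet K) :=
        sum_len_le_carleson_mul_volume (sparseF τ F)
    _ ≤ (Q * 4) * volume (pointSet ↑F) := mul_le_mul' h2 h3
    _ = 4 * Q * volume (pointSet ↑F) := by ring

lemma prune_sum_le (hτ : Function.Injective τ) (F : Finset DyadicI) :
    ∑ I ∈ pruneF τ F, len I ≤ 3 * ∑ I ∈ sparseF τ F, len I := by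
  classical
  set Dn := (pruneF τ F).filter
    (fun I => ¬ ENNReal.ofReal (len (τ I)) ≤ 4 * volume (freeA τ F I)) with hDn
  have hsplit : ∑ I ∈ sparseF τ F, len I + ∑ I ∈ Dn, len I = ∑ I ∈ pruneF τ F, len I := by
    rw [hDn, sparseF]
    exact Finset.sum_filter_add_sum_filter_not _ _ _
  have hD : ∑ I ∈ Dn, len I ≤ (2/3) * ∑ I ∈ Dn, ∑ J ∈ chF τ F I, len J := by
    rw [Finset.mul_sum]
    apply Finset.sum_le_sum
    intro I hI
    rw [hDn, Finset.mem_filter] at hI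
    exact dense_ineq hτ hI.1 hI.2
  have hDF : ∑ I ∈ Dn, ∑ J ∈ chF τ F I, len J ≤ ∑ J ∈ pruneF τ F, len J := by
    rw [← Finset.sum_biUnion]
    · apply Finset.sum_le_sum_of_subset_of_nonneg
      · exact Finset.biUnion_subset.mpr (fun I _ => chF_subset F I)
      · exact fun J _ _ => J.len_pos.le
    · intro I hI I' hI' hne
      show Disjoint (chF τ F I) (chF τ F I')
      rw [Finset.disjoint_left]
      intro J hJ hJ'
      have hIp : I ∈ pruneF τ F := by
        have := Finset.mem_coe.mp hI; rw [hDn, Finset.mem_filter] at this; exact this.1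
      have hI'p : I' ∈ pruneF τ F := by
        have := Finset.mem_coe.mp hI'; rw [hDn, Finset.mem_filter] at this; exact this.1
      exact chF_parent_unique hτ hIp hI'p hne hJ hJ'
  have hS0 : 0 ≤ ∑ I ∈ sparseF τ F, len I :=
    Finset.sum_nonneg (fun I _ => I.len_pos.le)
  have hD0 : 0 ≤ ∑ I ∈ Dn, len I :=
    Finset.sum_nonneg (fun I _ => I.len_pos.le)
  nlinarith [hD, hDF, hsplit]

lemma carleson_finset_ne_top (𝒢 : Finset DyadicI) : carleson ↑𝒢 ≠ ⊤ := by
  classical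
  rcases 𝒢.eq_empty_or_nonempty with rfl | hne
  · simp [carleson]
  obtain ⟨I₁, hI₁, hmin⟩ := Finset.exists_min_image 𝒢 len hne
  have hbound : carleson ↑𝒢
      ≤ (∑ J ∈ 𝒢, ENNReal.ofReal (len J)) / ENNReal.ofReal (len I₁) := by
    apply iSup₂_le
    intro I hI
    apply ENNReal.div_le_div
    · rw [tsum_len_subtype 𝒢 (fun J => toSet J ⊆ toSet I)]
      exact Finset.sum_le_sum_of_subset (Finset.filter_subset _ _)
    · exact ENNReal.ofReal_le_ofReal (hmin I (Finset.mem_coe.mp hI))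
  apply ne_top_of_le_ne_top _ hbound
  apply ne_of_lt
  apply ENNReal.div_lt_top
  · exact (ENNReal.sum_lt_top.mpr (fun J _ => ENNReal.ofReal_lt_top)).ne
  · exact (ENNReal.ofReal_pos.mpr I₁.len_pos).ne'

lemma finB (hτ : Function.Injective τ) (Q : ℝ≥0∞)
    (hQ : ∀ S : Finset DyadicI, S.Nonempty → carleson ↑S ≤ Q * carleson (τ '' ↑S))
    (F : Finset DyadicI) :
    ∫⁻ t in Set.Icc (0:ℝ) 1, muSet τ ↑F t ≤ 12 * Q * volume (pointSet ↑F) := by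
  classical
  have hmu : ∀ t, muSet τ ↑F t = muSet τ ↑(pruneF τ F) t := muSet_prune τ F
  have hterm : ∀ I : DyadicI, (∫⁻ t in Set.Icc (0:ℝ) 1, ENNReal.ofReal
      (len I / len (τ I) * Set.indicator (toSet (τ I)) (fun _ => (1:ℝ)) t))
      = ENNReal.ofReal (len I) := by
    intro I
    have heq : (fun t => ENNReal.ofReal
        (len I / len (τ I) * Set.indicator (toSet (τ I)) (fun _ => (1:ℝ)) t))
        = (toSet (τ I)).indicator (fun _ => ENNReal.ofReal (len I / len (τ I))) := by
      funext t
      by_cases ht : t ∈ toSet (τ I)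
      · rw [Set.indicator_of_mem ht, Set.indicator_of_mem ht, mul_one]
      · rw [Set.indicator_of_notMem ht, Set.indicator_of_notMem ht, mul_zero,
          ENNReal.ofReal_zero]
    rw [heq, lintegral_indicator_const (measurableSet_toSet _),
      Measure.restrict_apply (measurableSet_toSet _),
      Set.inter_eq_self_of_subset_left
        ((toSet_subset_Ico _).trans Set.Ico_subset_Icc_self),
      volume_toSet, ← ENNReal.ofReal_mul (div_pos I.len_pos (τ I).len_pos).le,
      div_mul_cancel₀ _ (τ I).len_ne_zero]
  calc ∫⁻ t in Set.Icc (0:ℝ) 1, muSet τ ↑F t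
      = ∫⁻ t in Set.Icc (0:ℝ) 1, muSet τ ↑(pruneF τ F) t :=
        lintegral_congr (fun t => hmu t)
    _ ≤ ∫⁻ t in Set.Icc (0:ℝ) 1, ∑ I ∈ pruneF τ F, ENNReal.ofReal
        (len I / len (τ I) * Set.indicator (toSet (τ I)) (fun _ => (1:ℝ)) t) := by
        apply lintegral_mono
        intro t
        apply iSup₂_le
        intro I hI
        exact Finset.single_le_sum (f := fun I => ENNReal.ofReal
          (len I / len (τ I) * Set.indicator (toSet (τ I)) (fun _ => (1:ℝ)) t))
          (fun J _ => zero_le) (Finset.mem_coe.mp hI)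
    _ = ∑ I ∈ pruneF τ F, ∫⁻ t in Set.Icc (0:ℝ) 1, ENNReal.ofReal
        (len I / len (τ I) * Set.indicator (toSet (τ I)) (fun _ => (1:ℝ)) t) := by
        apply lintegral_finset_sum
        intro I _
        exact ((measurable_const.indicator (measurableSet_toSet (τ I))).const_mul
          _).ennreal_ofReal
    _ = ∑ I ∈ pruneF τ F, ENNReal.ofReal (len I) :=
        Finset.sum_congr rfl (fun I _ => hterm I)
    _ ≤ 12 * Q * volume (pointSet ↑F) := by
        rw [← ENNReal.ofReal_sum_of_nonneg (fun I _ => I.len_pos.le)]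
        calc ENNReal.ofReal (∑ I ∈ pruneF τ F, len I)
            ≤ ENNReal.ofReal (3 * ∑ I ∈ sparseF τ F, len I) :=
              ENNReal.ofReal_le_ofReal (prune_sum_le hτ F)
          _ = 3 * ENNReal.ofReal (∑ I ∈ sparseF τ F, len I) := by
              rw [ENNReal.ofReal_mul (by norm_num : (0:ℝ) ≤ 3)]
              norm_num
          _ = 3 * ∑ I ∈ sparseF τ F, ENNReal.ofReal (len I) := by
              rw [← ENNReal.ofReal_sum_of_nonneg (fun I _ => I.len_pos.le)]
          _ ≤ 3 * (4 * Q * volume (pointSet ↑F)) :=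
              mul_le_mul_right (sparse_sum hτ Q hQ F) _
          _ = 12 * Q * volume (pointSet ↑F) := by ring

end DirB3
section Final
open DyadicI MeasureTheory

lemma dirB (τ : DyadicI → DyadicI) (hτ : Function.Injective τ) :
    Cone τ ≤ ENNReal.ofReal 12 *
      (⨆ (L : Set DyadicI) (_ : L.Nonempty), carleson L / carleson (τ '' L)) := by
  classical
  set Q := ⨆ (L : Set DyadicI) (_ : L.Nonempty), carleson L / carleson (τ '' L) with hQdef
  have hQ : ∀ S : Finset DyadicI, S.Nonempty → carleson ↑S ≤ Q * carleson (τ '' ↑S) := by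
    intro S hS
    have h1 : carleson ↑S / carleson (τ '' ↑S) ≤ Q :=
      le_iSup₂ (f := fun (L : Set DyadicI) (_ : L.Nonempty) =>
        carleson L / carleson (τ '' L)) (↑S : Set DyadicI) hS.to_set
    have h2 : carleson (τ '' ↑S) ≠ 0 := by
      intro h0
      have h1' := one_le_carleson (C := τ '' ↑S)
        ⟨τ hS.choose, Set.mem_image_of_mem τ (Finset.mem_coe.mpr hS.choose_spec)⟩
      rw [h0] at h1'
      simp at h1'
    have h3 : carleson (τ '' ↑S) ≠ ⊤ := by
      rw [← Finset.coe_image]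
      exact carleson_finset_ne_top (S.image τ)
    calc carleson ↑S = carleson ↑S / carleson (τ '' ↑S) * carleson (τ '' ↑S) :=
          (ENNReal.div_mul_cancel h2 h3).symm
      _ ≤ Q * carleson (τ '' ↑S) := mul_le_mul_left h1 _
  have h12 : ENNReal.ofReal 12 = (12 : ℝ≥0∞) := by
    norm_num
  rw [h12]
  apply iSup₂_le
  intro L hL
  apply ENNReal.div_le_of_le_mul
  -- countable exhaustion of L
  obtain ⟨f, rfl⟩ := Set.Countable.exists_eq_range L.to_countable hL
  set Fn : ℕ → Finset DyadicI := fun n => (Finset.range (n+1)).image f with hFn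
  have hsubn : ∀ n, (↑(Fn n) : Set DyadicI) ⊆ Set.range f := by
    intro n x hx
    rw [hFn, Finset.mem_coe, Finset.mem_image] at hx
    obtain ⟨m, _, rfl⟩ := hx
    exact Set.mem_range_self m
  have hLU : Set.range f = ⋃ n, (↑(Fn n) : Set DyadicI) := by
    apply subset_antisymm
    · rintro x ⟨m, rfl⟩
      apply Set.mem_iUnion.mpr
      exact ⟨m, by
        rw [hFn, Finset.mem_coe, Finset.mem_image]
        exact ⟨m, Finset.mem_range.mpr (Nat.lt_succ_self m), rfl⟩⟩
    · exact Set.iUnion_subset hsubn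
  have hmuU : ∀ t, muSet τ (Set.range f) t = ⨆ n, muSet τ ↑(Fn n) t := by
    intro t
    simp only [muSet]
    rw [hLU]
    exact iSup_iUnion (fun n => (↑(Fn n) : Set DyadicI)) (fun I =>
      ENNReal.ofReal (len I / len (τ I) *
        Set.indicator (toSet (τ I)) (fun _ => (1:ℝ)) t))
  have hmono : Monotone (fun n => muSet τ (↑(Fn n) : Set DyadicI)) := by
    intro n m hnm
    intro t
    apply iSup₂_le
    intro I hI
    refine le_iSup₂ (f := fun (J : DyadicI) (_ : J ∈ (↑(Fn m) : Set DyadicI)) =>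
      ENNReal.ofReal (len J / len (τ J) *
        Set.indicator (toSet (τ J)) (fun _ => (1:ℝ)) t)) I ?_
    rw [Finset.mem_coe, hFn, Finset.mem_image] at hI ⊢
    obtain ⟨j, hj, rfl⟩ := hI
    exact ⟨j, Finset.mem_range.mpr (lt_of_lt_of_le (Finset.mem_range.mp hj)
      (Nat.succ_le_succ hnm)), rfl⟩
  have hint : ∫⁻ t in Set.Icc (0:ℝ) 1, muSet τ (Set.range f) t
      = ⨆ n, ∫⁻ t in Set.Icc (0:ℝ) 1, muSet τ ↑(Fn n) t := by
    rw [lintegral_congr (fun t => hmuU t)]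
    exact lintegral_iSup (fun n => measurable_muSet τ _) hmono
  rw [hint]
  apply iSup_le
  intro n
  calc ∫⁻ t in Set.Icc (0:ℝ) 1, muSet τ ↑(Fn n) t
      ≤ 12 * Q * volume (pointSet ↑(Fn n)) := finB hτ Q hQ (Fn n)
    _ ≤ 12 * Q * volume (pointSet (Set.range f)) := by
        apply mul_le_mul_right
        apply measure_mono
        apply Set.iUnion₂_subset
        intro I hI
        exact Set.subset_biUnion_of_mem (hsubn n hI)

end Final

/-- There are absolute constants `c, C > 0` such that for every
injective `τ : D → D` (with inverse `σ = τ⁻¹` on `τ(D)`),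
`c · sup_{𝒞 ⊆ τ(D), 𝒞 ≠ ∅} ⟦σ(𝒞)⟧/⟦𝒞⟧ ≤ C₁ ≤ C · sup_{𝒞 ⊆ τ(D), 𝒞 ≠ ∅} ⟦σ(𝒞)⟧/⟦𝒞⟧`
in `[0,∞]`, where nonempty collections `𝒞 ⊆ τ(D)` are parametrized as `𝒞 = τ(L)`
for nonempty `L ⊆ D`, so that `σ(𝒞) = L`. -/
theorem statement6 :
    ∃ c C : ℝ, 0 < c ∧ 0 < C ∧
      ∀ (τ : DyadicI → DyadicI), Function.Injective τ →
        ENNReal.ofReal c *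
            (⨆ (L : Set DyadicI) (_ : L.Nonempty), carleson L / carleson (τ '' L)) ≤
          Cone τ ∧
        Cone τ ≤ ENNReal.ofReal C *
            (⨆ (L : Set DyadicI) (_ : L.Nonempty), carleson L / carleson (τ '' L)) := by
  refine ⟨1, 12, one_pos, by norm_num, ?_⟩
  intro τ hτ
  constructor
  · rw [ENNReal.ofReal_one, one_mul]
    apply iSup₂_le
    intro L _
    exact ENNReal.div_le_of_le_mul (dirA τ hτ L)
  · exact dirB τ hτ
end
end

section
/- Let τ : D → D be injective, let L ⊆ D be finite, and let f = Σ_{J∈L} a_J h_J with real coefficients a_J. Then for every t ∈ [0,1], S(T_{τ,1} f)(t) ≤ μ_{τ(L)}(t)^{1/2} · S(T_{τ,2} f)(t), where τ(L) = {τ(J) : J ∈ L}. -/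
open MeasureTheory Set
open scoped ENNReal NNReal Classical

noncomputable section

open DyadicI

/-- Let `τ : D → D` be injective, `L ⊆ D` finite and
`f = ∑_{J ∈ L} a_J h_J`. Then for every `t ∈ [0,1]`,
`S(T_{τ,1} f)(t) ≤ μ_{τ(L)}(t)^{1/2} · S(T_{τ,2} f)(t)`. -/
theorem statement7 (τ : DyadicI → DyadicI) (hτ : Function.Injective τ)
    (L : Finset DyadicI) (a : DyadicI → ℝ) (t : ℝ) (ht : t ∈ Set.Icc (0 : ℝ) 1) :
    sqFnS (L.image τ) (rearrCoefS τ 1 L a) t ≤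
      Real.sqrt (muFin τ L t) * sqFnS (L.image τ) (rearrCoefS τ 2 L a) t := by
  classical
  have hlen : ∀ I : DyadicI, 0 < I.len := by
    intro I; unfold DyadicI.len; positivity
  set ind : DyadicI → ℝ := fun J => Set.indicator (toSet J) (fun _ => (1:ℝ)) t with hind
  have hind01 : ∀ J, ind J = 0 ∨ ind J = 1 := by
    intro J; by_cases h : t ∈ toSet J
    · right; simp [ind, Set.indicator_of_mem h]
    · left; simp [ind, Set.indicator_of_notMem h]
  have hcoef : ∀ (p : ℝ) (I : DyadicI), I ∈ L →
      rearrCoefS τ p L a (τ I) = ((len I / len (τ I)) ^ (1/p)) * a I := by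
    intro p I hI
    unfold rearrCoefS
    rw [Finset.sum_eq_single I]
    · simp
    · intro I' _ hne
      rw [if_neg (fun h => hne (hτ h))]
    · intro h; exact absurd hI h
  have hμ : 0 ≤ muFin τ L t := NNReal.coe_nonneg _
  have key : ∀ I ∈ L,
      (rearrCoefS τ 1 L a (τ I))^2 * ind (τ I) ≤
      muFin τ L t * ((rearrCoefS τ 2 L a (τ I))^2 * ind (τ I)) := by
    intro I hI
    rw [hcoef 1 I hI, hcoef 2 I hI]
    set r := len I / len (τ I) with hr
    have hr0 : 0 ≤ r := le_of_lt (div_pos (hlen I) (hlen (τ I)))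
    have hrμ : r * ind (τ I) ≤ muFin τ L t := by
      unfold muFin
      calc r * ind (τ I) ≤ max (r * ind (τ I)) 0 := le_max_left _ _
        _ = ((Real.toNNReal (r * ind (τ I)) : ℝ≥0) : ℝ) := by
            rw [Real.coe_toNNReal']
        _ ≤ _ := by
            exact_mod_cast NNReal.coe_le_coe.mpr
              (Finset.le_sup (f := fun I => Real.toNNReal
                (len I / len (τ I) * Set.indicator (toSet (τ I)) (fun _ => (1:ℝ)) t)) hI)
    have h2 : ((r ^ (1/(2:ℝ))) * a I)^2 = r * a I ^ 2 := by
      rw [mul_pow, ← Real.rpow_natCast (r ^ (1/(2:ℝ))) 2, ← Real.rpow_mul hr0]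
      norm_num
    have h1 : ((r ^ (1/(1:ℝ))) * a I)^2 = r^2 * a I ^ 2 := by
      rw [show (1/(1:ℝ))=1 by norm_num, Real.rpow_one]; ring
    rw [h1, h2]
    rcases hind01 (τ I) with h | h
    · simp [h]
    · rw [h, mul_one] at hrμ ⊢
      rw [mul_one]
      calc r^2 * a I^2 = r * (r * a I^2) := by ring
        _ ≤ muFin τ L t * (r * a I^2) :=
            mul_le_mul_of_nonneg_right hrμ (by positivity)
  unfold sqFnS
  rw [← Real.sqrt_mul hμ]
  apply Real.sqrt_le_sqrt
  rw [Finset.sum_image (fun x _ y _ h => hτ h), Finset.sum_image (fun x _ y _ h => hτ h),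
    Finset.mul_sum]
  exact Finset.sum_le_sum key
end
end
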